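/- There exists a family 𝒜 = {A_1, A_2, A_3, A_4} of four open subsets of ℝ² such that every three of the sets have nonempty intersection, the intersection of all four sets is empty, and for every σ ⊆ {1,2,3,4} with |σ| ∈ {2,3} the set A_σ = ⋂_{i∈σ} A_i is open and path-connected. In particular, f_3(𝒜) = 0 and f_2(𝒜) = 4. -/

import Mathlib

/-- `fNum A k` is `f_k(𝒜)`: the number of subsets `σ` of the index set with
`|σ| = k+1` such that `⋂ i ∈ σ, A i` is nonempty. -/
noncomputable def fNum {α : Type*} {n : ℕ} (A : Fin n → Set α) (k : ℕ) : ℕ :=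
  Nat.card {σ : Finset (Fin n) // σ.card = k + 1 ∧ (⋂ i ∈ σ, A i).Nonempty}

namespace FourSetsAux

noncomputable def La : EuclideanSpace ℝ (Fin 2) →L[ℝ] ℝ := EuclideanSpace.proj 0
noncomputable def Lb : EuclideanSpace ℝ (Fin 2) →L[ℝ] ℝ := EuclideanSpace.proj 1
noncomputable def Lc : EuclideanSpace ℝ (Fin 2) →L[ℝ] ℝ := -La - Lb

def pt (s t : ℝ) : EuclideanSpace ℝ (Fin 2) := WithLp.toLp 2 ![s, t]

@[simp] lemma La_pt (s t : ℝ) : La (pt s t) = s := rfl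
@[simp] lemma Lb_pt (s t : ℝ) : Lb (pt s t) = t := rfl
@[simp] lemma Lc_pt (s t : ℝ) : Lc (pt s t) = -s - t := by
  simp [Lc, ContinuousLinearMap.sub_apply, ContinuousLinearMap.neg_apply]

noncomputable def Afam : Fin 4 → Set (EuclideanSpace ℝ (Fin 2))
  | 0 => {x | La x < 1}
  | 1 => {x | Lb x < 1}
  | 2 => {x | Lc x < 1}
  | 3 => {x | 1 < La x} ∪ {x | 1 < Lb x} ∪ {x | 1 < Lc x}

lemma opnlt (L : EuclideanSpace ℝ (Fin 2) →L[ℝ] ℝ) (r : ℝ) : IsOpen {x | L x < r} :=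
  isOpen_lt L.continuous continuous_const

lemma opngt (L : EuclideanSpace ℝ (Fin 2) →L[ℝ] ℝ) (r : ℝ) : IsOpen {x | r < L x} :=
  isOpen_lt continuous_const L.continuous

lemma cvxlt (L : EuclideanSpace ℝ (Fin 2) →L[ℝ] ℝ) (r : ℝ) : Convex ℝ {x | L x < r} :=
  convex_halfSpace_lt ⟨L.map_add, L.map_smul⟩ r

lemma cvxgt (L : EuclideanSpace ℝ (Fin 2) →L[ℝ] ℝ) (r : ℝ) : Convex ℝ {x | r < L x} :=
  convex_halfSpace_gt ⟨L.map_add, L.map_smul⟩ r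

end FourSetsAux

open FourSetsAux

/-- **Example with four sets.** There are four open sets in `ℝ²` such that every three
of them intersect, all four have empty intersection, and every intersection of two or
three of them is open and path-connected. In particular `f_3(𝒜) = 0` and `f_2(𝒜) = 4`. -/
theorem four_sets_example :
    ∃ A : Fin 4 → Set (EuclideanSpace ℝ (Fin 2)),
      (∀ i, IsOpen (A i)) ∧
      (∀ σ : Finset (Fin 4), σ.card = 3 → (⋂ i ∈ σ, A i).Nonempty) ∧
      (⋂ i, A i) = ∅ ∧
      (∀ σ : Finset (Fin 4), σ.card = 2 ∨ σ.card = 3 →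
        IsOpen (⋂ i ∈ σ, A i) ∧ IsPathConnected (⋂ i ∈ σ, A i)) ∧
      fNum A 3 = 0 ∧ fNum A 2 = 4 := by
  have hopen : ∀ i, IsOpen (Afam i) := by
    intro i
    match i with
    | 0 => exact opnlt La 1
    | 1 => exact opnlt Lb 1
    | 2 => exact opnlt Lc 1
    | 3 => exact ((opngt La 1).union (opngt Lb 1)).union (opngt Lc 1)
  have hempty : (⋂ i, Afam i) = ∅ := by
    ext x
    simp only [Set.mem_iInter, Set.mem_empty_iff_false, iff_false]
    intro h
    have h0 := h 0; have h1 := h 1; have h2 := h 2; have h3 := h 3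
    simp only [Afam, Set.mem_setOf_eq, Set.mem_union] at h0 h1 h2 h3
    rcases h3 with (h'|h')|h' <;> linarith
  have key : ∀ σ : Finset (Fin 4), σ.card = 2 ∨ σ.card = 3 →
      IsOpen (⋂ i ∈ σ, Afam i) ∧ IsPathConnected (⋂ i ∈ σ, Afam i) := by
    intro σ hσ
    have hcases : σ = {0,1} ∨ σ = {0,2} ∨ σ = {0,3} ∨ σ = {1,2} ∨ σ = {1,3} ∨ σ = {2,3}
        ∨ σ = {0,1,2} ∨ σ = {0,1,3} ∨ σ = {0,2,3} ∨ σ = {1,2,3} := by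
      revert hσ; revert σ; decide
    rcases hcases with rfl|rfl|rfl|rfl|rfl|rfl|rfl|rfl|rfl|rfl
    · -- {0,1}
      have e : (⋂ i ∈ ({0,1}:Finset (Fin 4)), Afam i) = {x | La x < 1} ∩ {x | Lb x < 1} := by
        ext x; simp [Afam]
      rw [e]
      exact ⟨(opnlt La 1).inter (opnlt Lb 1),
        ((cvxlt La 1).inter (cvxlt Lb 1)).isPathConnected
          ⟨pt 0 0, by norm_num [Set.mem_inter_iff, Set.mem_setOf_eq]⟩⟩
    · -- {0,2}
      have e : (⋂ i ∈ ({0,2}:Finset (Fin 4)), Afam i) = {x | La x < 1} ∩ {x | Lc x < 1} := by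
        ext x; simp [Afam]
      rw [e]
      exact ⟨(opnlt La 1).inter (opnlt Lc 1),
        ((cvxlt La 1).inter (cvxlt Lc 1)).isPathConnected
          ⟨pt 0 0, by norm_num [Set.mem_inter_iff, Set.mem_setOf_eq]⟩⟩
    · -- {0,3}
      have e : (⋂ i ∈ ({0,3}:Finset (Fin 4)), Afam i)
          = ({x | La x < 1} ∩ {x | 1 < Lb x}) ∪ ({x | La x < 1} ∩ {x | 1 < Lc x}) := by
        ext x
        simp only [Finset.mem_insert, Finset.mem_singleton, Set.mem_iInter, Set.mem_union,
          Set.mem_inter_iff, Set.mem_setOf_eq, Afam, forall_eq_or_imp, forall_eq]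
        constructor
        · rintro ⟨h0, (h|h)|h⟩
          · linarith
          · exact Or.inl ⟨h0, h⟩
          · exact Or.inr ⟨h0, h⟩
        · tauto
      rw [e]
      refine ⟨((opnlt La 1).inter (opngt Lb 1)).union ((opnlt La 1).inter (opngt Lc 1)), ?_⟩
      refine IsPathConnected.union
        (((cvxlt La 1).inter (cvxgt Lb 1)).isPathConnected
          ⟨pt 0 2, by norm_num [Set.mem_inter_iff, Set.mem_setOf_eq]⟩)
        (((cvxlt La 1).inter (cvxgt Lc 1)).isPathConnected
          ⟨pt (-1) (-1), by norm_num [Set.mem_inter_iff, Set.mem_setOf_eq]⟩)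
        ⟨pt (-4) 2, by norm_num [Set.mem_inter_iff, Set.mem_setOf_eq]⟩
    · -- {1,2}
      have e : (⋂ i ∈ ({1,2}:Finset (Fin 4)), Afam i) = {x | Lb x < 1} ∩ {x | Lc x < 1} := by
        ext x; simp [Afam]
      rw [e]
      exact ⟨(opnlt Lb 1).inter (opnlt Lc 1),
        ((cvxlt Lb 1).inter (cvxlt Lc 1)).isPathConnected
          ⟨pt 0 0, by norm_num [Set.mem_inter_iff, Set.mem_setOf_eq]⟩⟩
    · -- {1,3}
      have e : (⋂ i ∈ ({1,3}:Finset (Fin 4)), Afam i)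
          = ({x | Lb x < 1} ∩ {x | 1 < La x}) ∪ ({x | Lb x < 1} ∩ {x | 1 < Lc x}) := by
        ext x
        simp only [Finset.mem_insert, Finset.mem_singleton, Set.mem_iInter, Set.mem_union,
          Set.mem_inter_iff, Set.mem_setOf_eq, Afam, forall_eq_or_imp, forall_eq]
        constructor
        · rintro ⟨h0, (h|h)|h⟩
          · exact Or.inl ⟨h0, h⟩
          · linarith
          · exact Or.inr ⟨h0, h⟩
        · tauto
      rw [e]
      refine ⟨((opnlt Lb 1).inter (opngt La 1)).union ((opnlt Lb 1).inter (opngt Lc 1)), ?_⟩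
      refine IsPathConnected.union
        (((cvxlt Lb 1).inter (cvxgt La 1)).isPathConnected
          ⟨pt 2 0, by norm_num [Set.mem_inter_iff, Set.mem_setOf_eq]⟩)
        (((cvxlt Lb 1).inter (cvxgt Lc 1)).isPathConnected
          ⟨pt (-1) (-1), by norm_num [Set.mem_inter_iff, Set.mem_setOf_eq]⟩)
        ⟨pt 2 (-4), by norm_num [Set.mem_inter_iff, Set.mem_setOf_eq]⟩
    · -- {2,3}
      have e : (⋂ i ∈ ({2,3}:Finset (Fin 4)), Afam i)
          = ({x | Lc x < 1} ∩ {x | 1 < La x}) ∪ ({x | Lc x < 1} ∩ {x | 1 < Lb x}) := by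
        ext x
        simp only [Finset.mem_insert, Finset.mem_singleton, Set.mem_iInter, Set.mem_union,
          Set.mem_inter_iff, Set.mem_setOf_eq, Afam, forall_eq_or_imp, forall_eq]
        constructor
        · rintro ⟨h0, (h|h)|h⟩
          · exact Or.inl ⟨h0, h⟩
          · exact Or.inr ⟨h0, h⟩
          · linarith
        · tauto
      rw [e]
      refine ⟨((opnlt Lc 1).inter (opngt La 1)).union ((opnlt Lc 1).inter (opngt Lb 1)), ?_⟩
      refine IsPathConnected.union
        (((cvxlt Lc 1).inter (cvxgt La 1)).isPathConnected
          ⟨pt 2 0, by norm_num [Set.mem_inter_iff, Set.mem_setOf_eq]⟩)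
        (((cvxlt Lc 1).inter (cvxgt Lb 1)).isPathConnected
          ⟨pt 0 2, by norm_num [Set.mem_inter_iff, Set.mem_setOf_eq]⟩)
        ⟨pt 2 2, by norm_num [Set.mem_inter_iff, Set.mem_setOf_eq]⟩
    · -- {0,1,2}
      have e : (⋂ i ∈ ({0,1,2}:Finset (Fin 4)), Afam i)
          = {x | La x < 1} ∩ ({x | Lb x < 1} ∩ {x | Lc x < 1}) := by
        ext x; simp [Afam]
      rw [e]
      exact ⟨(opnlt La 1).inter ((opnlt Lb 1).inter (opnlt Lc 1)),
        ((cvxlt La 1).inter ((cvxlt Lb 1).inter (cvxlt Lc 1))).isPathConnected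
          ⟨pt 0 0, by norm_num [Set.mem_inter_iff, Set.mem_setOf_eq]⟩⟩
    · -- {0,1,3}
      have e : (⋂ i ∈ ({0,1,3}:Finset (Fin 4)), Afam i)
          = {x | La x < 1} ∩ ({x | Lb x < 1} ∩ {x | 1 < Lc x}) := by
        ext x
        simp only [Finset.mem_insert, Finset.mem_singleton, Set.mem_iInter, Set.mem_union,
          Set.mem_inter_iff, Set.mem_setOf_eq, Afam, forall_eq_or_imp, forall_eq]
        constructor
        · rintro ⟨h0, h1, (h|h)|h⟩
          · linarith
          · linarith
          · exact ⟨h0, h1, h⟩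
        · tauto
      rw [e]
      exact ⟨(opnlt La 1).inter ((opnlt Lb 1).inter (opngt Lc 1)),
        ((cvxlt La 1).inter ((cvxlt Lb 1).inter (cvxgt Lc 1))).isPathConnected
          ⟨pt (-1) (-1), by norm_num [Set.mem_inter_iff, Set.mem_setOf_eq]⟩⟩
    · -- {0,2,3}
      have e : (⋂ i ∈ ({0,2,3}:Finset (Fin 4)), Afam i)
          = {x | La x < 1} ∩ ({x | Lc x < 1} ∩ {x | 1 < Lb x}) := by
        ext x
        simp only [Finset.mem_insert, Finset.mem_singleton, Set.mem_iInter, Set.mem_union,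
          Set.mem_inter_iff, Set.mem_setOf_eq, Afam, forall_eq_or_imp, forall_eq]
        constructor
        · rintro ⟨h0, h1, (h|h)|h⟩
          · linarith
          · exact ⟨h0, h1, h⟩
          · linarith
        · tauto
      rw [e]
      exact ⟨(opnlt La 1).inter ((opnlt Lc 1).inter (opngt Lb 1)),
        ((cvxlt La 1).inter ((cvxlt Lc 1).inter (cvxgt Lb 1))).isPathConnected
          ⟨pt 0 2, by norm_num [Set.mem_inter_iff, Set.mem_setOf_eq]⟩⟩
    · -- {1,2,3}
      have e : (⋂ i ∈ ({1,2,3}:Finset (Fin 4)), Afam i)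
          = {x | Lb x < 1} ∩ ({x | Lc x < 1} ∩ {x | 1 < La x}) := by
        ext x
        simp only [Finset.mem_insert, Finset.mem_singleton, Set.mem_iInter, Set.mem_union,
          Set.mem_inter_iff, Set.mem_setOf_eq, Afam, forall_eq_or_imp, forall_eq]
        constructor
        · rintro ⟨h0, h1, (h|h)|h⟩
          · exact ⟨h0, h1, h⟩
          · linarith
          · linarith
        · tauto
      rw [e]
      exact ⟨(opnlt Lb 1).inter ((opnlt Lc 1).inter (opngt La 1)),
        ((cvxlt Lb 1).inter ((cvxlt Lc 1).inter (cvxgt La 1))).isPathConnected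
          ⟨pt 2 0, by norm_num [Set.mem_inter_iff, Set.mem_setOf_eq]⟩⟩
  have htri : ∀ σ : Finset (Fin 4), σ.card = 3 → (⋂ i ∈ σ, Afam i).Nonempty := by
    intro σ h
    obtain ⟨x, hx, -⟩ := (key σ (Or.inr h)).2
    exact ⟨x, hx⟩
  have h3 : fNum Afam 3 = 0 := by
    have hE : IsEmpty {σ : Finset (Fin 4) // σ.card = 3 + 1 ∧ (⋂ i ∈ σ, Afam i).Nonempty} := by
      constructor
      rintro ⟨σ, hc, x, hx⟩
      have hu : σ = Finset.univ := Finset.eq_univ_of_card σ (by simpa using hc)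
      subst hu
      have hx' : x ∈ ⋂ i, Afam i := by
        simp only [Set.mem_iInter] at hx ⊢
        exact fun i => hx i (Finset.mem_univ i)
      rw [hempty] at hx'
      exact hx'
    rw [fNum]
    exact Nat.card_of_isEmpty
  have h2 : fNum Afam 2 = 4 := by
    rw [fNum]
    have e : ∀ σ : Finset (Fin 4),
        (σ.card = 2 + 1 ∧ (⋂ i ∈ σ, Afam i).Nonempty) ↔ σ.card = 3 :=
      fun σ => ⟨fun h => h.1, fun h => ⟨h, htri σ h⟩⟩
    rw [Nat.card_congr (Equiv.subtypeEquivRight e), Nat.card_eq_fintype_card,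
      Fintype.card_finset_len]
    decide
  exact ⟨Afam, hopen, htri, hempty, key, h3, h2⟩
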